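/- arXiv:1810.04813 — 4 statements merged into one kernel-verified Lean document; each statement's English description precedes it below -/
import Mathlib

section
/- For nonnegative integers m and any b, c in a commutative ring where the relevant Pochhammer values are invertible, Gauss's summation specializes to: ∑_{n=0}^{m} ((-m)_n (b)_n)/((c)_n n!) = (c-b)_m / (c)_m, where (a)_n = a(a+1)⋯(a+n-1) is the rising factorial. -/
open Polynomial

private lemma asc_succ_left_eval {R : Type*} [CommRing R] (k : ℕ) (x : R) :
    (ascPochhammer R (k+1)).eval x = x * (ascPochhammer R k).eval (x + 1) := by
  rw [ascPochhammer_succ_left, X_mul, eval_mul_X, eval_comp]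
  simp [mul_comm]

private lemma key {R : Type*} [CommRing R] (b : R) : ∀ (m : ℕ) (c : R),
    ∑ n ∈ Finset.range (m + 1),
      (-1 : R) ^ n * (m.choose n) * (ascPochhammer R n).eval b *
        (ascPochhammer R (m - n)).eval (c + n) =
      (ascPochhammer R m).eval (c - b) := by
  intro m
  induction m with
  | zero => intro c; simp
  | succ m ih =>
    intro c
    have hsplit : ∀ i ∈ Finset.range (m + 1),
        (-1 : R) ^ (i+1) * ((m+1).choose (i+1)) * (ascPochhammer R (i+1)).eval b *
          (ascPochhammer R (m - i)).eval (c + ((i:R)+1)) =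
        (-1 : R) ^ (i+1) * (m.choose (i+1)) * (ascPochhammer R (i+1)).eval b *
          (ascPochhammer R (m - i)).eval (c + ((i:R)+1)) +
        (-1 : R) ^ (i+1) * (m.choose i) * (ascPochhammer R (i+1)).eval b *
          (ascPochhammer R (m - i)).eval (c + ((i:R)+1)) := by
      intro i _
      rw [Nat.choose_succ_succ]
      push_cast
      ring
    rw [Finset.sum_range_succ']
    push_cast
    rw [Finset.sum_congr rfl hsplit, Finset.sum_add_distrib]
    have hB : (∑ i ∈ Finset.range (m + 1),
          (-1 : R) ^ (i+1) * (m.choose (i+1)) * (ascPochhammer R (i+1)).eval b *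
            (ascPochhammer R (m - i)).eval (c + ((i:R)+1))) +
        ((-1 : R) ^ 0 * ((m+1).choose 0) * (ascPochhammer R 0).eval b *
          (ascPochhammer R (m + 1)).eval (c + 0)) =
        ∑ n ∈ Finset.range (m + 1),
          (-1 : R) ^ n * (m.choose n) * (ascPochhammer R n).eval b *
            (ascPochhammer R (m + 1 - n)).eval (c + n) := by
      rw [Finset.sum_range_succ (fun i => (-1 : R) ^ (i+1) * (m.choose (i+1)) *
            (ascPochhammer R (i+1)).eval b *
            (ascPochhammer R (m - i)).eval (c + ((i:R)+1))),
        Finset.sum_range_succ']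
      simp [Nat.choose_eq_zero_of_lt (Nat.lt_succ_self m)]
    rw [add_right_comm, hB]
    -- now combine the full sum with the A-piece termwise
    have hcomb : ∀ n ∈ Finset.range (m + 1),
        ((-1 : R) ^ n * (m.choose n) * (ascPochhammer R n).eval b *
            (ascPochhammer R (m + 1 - n)).eval (c + n) +
          (-1 : R) ^ (n+1) * (m.choose n) * (ascPochhammer R (n+1)).eval b *
            (ascPochhammer R (m - n)).eval (c + (n+1))) =
        (c - b) * ((-1 : R) ^ n * (m.choose n) * (ascPochhammer R n).eval b *
            (ascPochhammer R (m - n)).eval ((c + 1) + n)) := by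
      intro n hn
      have hn' : n ≤ m := by simpa using Nat.lt_succ_iff.mp (Finset.mem_range.mp hn)
      rw [show m + 1 - n = (m - n) + 1 by omega, asc_succ_left_eval,
        ascPochhammer_succ_eval]
      have e1 : c + (n:R) + 1 = (c + 1) + n := by ring
      have e2 : c + ((n:R) + 1) = (c + 1) + n := by push_cast; ring
      rw [e1, e2]
      ring
    rw [← Finset.sum_add_distrib, Finset.sum_congr rfl hcomb, ← Finset.mul_sum, ih (c + 1),
      show c + 1 - b = (c - b) + 1 by ring, ← asc_succ_left_eval]

/-- Chu–Vandermonde / terminating Gauss summation: for `b c` in a field where the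
relevant Pochhammer values and factorials are invertible,
`∑_{n=0}^{m} (-m)_n (b)_n / ((c)_n n!) = (c - b)_m / (c)_m`. -/
theorem stmt_2 {F : Type*} [Field F] (m : ℕ) (b c : F)
    (hc : ∀ n ≤ m, (ascPochhammer F n).eval c ≠ 0)
    (hfac : ∀ n ≤ m, (n.factorial : F) ≠ 0) :
    ∑ n ∈ Finset.range (m + 1),
      (ascPochhammer F n).eval (-(m : F)) * (ascPochhammer F n).eval b /
        ((ascPochhammer F n).eval c * (n.factorial : F)) =
      (ascPochhammer F m).eval (c - b) / (ascPochhammer F m).eval c := by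
  have hterm : ∀ n ∈ Finset.range (m + 1),
      (ascPochhammer F n).eval (-(m : F)) * (ascPochhammer F n).eval b /
        ((ascPochhammer F n).eval c * (n.factorial : F)) =
      ((-1 : F) ^ n * (m.choose n) * (ascPochhammer F n).eval b *
        (ascPochhammer F (m - n)).eval (c + n)) / (ascPochhammer F m).eval c := by
    intro n hn
    have hn' : n ≤ m := Nat.lt_succ_iff.mp (Finset.mem_range.mp hn)
    have h1 : (ascPochhammer F n).eval (-(m : F)) =
        (-1 : F) ^ n * (m.choose n) * (n.factorial : F) := by
      rw [ascPochhammer_eval_neg_eq_descPochhammer, descPochhammer_eval_eq_descFactorial,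
        Nat.descFactorial_eq_factorial_mul_choose]
      push_cast; ring
    have h2 : (ascPochhammer F n).eval c * (ascPochhammer F (m - n)).eval (c + n) =
        (ascPochhammer F m).eval c := by
      have := congrArg (fun p => Polynomial.eval c p) (ascPochhammer_mul F n (m - n))
      simp only [eval_mul, eval_comp, eval_add, eval_X, eval_natCast] at this
      rwa [show n + (m - n) = m by omega] at this
    rw [h1, div_eq_div_iff (by exact mul_ne_zero (hc n hn') (hfac n hn'))
      (hc m le_rfl), ← h2]
    ring
  rw [Finset.sum_congr rfl hterm, ← Finset.sum_div, key b m c]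
end

section
/- For every prime p and positive integers k_1, ..., k_r, the reversal identity holds: ∑_{p > m_1 > ⋯ > m_r > 0} 1/(m_1^{k_1} ⋯ m_r^{k_r}) ≡ (-1)^{k_1+⋯+k_r} ∑_{p > m_1 > ⋯ > m_r > 0} 1/(m_1^{k_r} ⋯ m_r^{k_1}) (mod p). -/
/-- Auxiliary strict truncated multiple harmonic sum: `HAux p N [k₁,…,k_r]` is
`∑_{N > m₁ > ⋯ > m_r > 0} ∏ᵢ mᵢ^{-kᵢ}` in `ℤ/pℤ`. -/
def HAux (p : ℕ) : ℕ → List ℕ → ZMod p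
  | _, [] => 1
  | N, k :: ks => ∑ m ∈ Finset.Ioo 0 N, ((m : ZMod p))⁻¹ ^ k * HAux p m ks

/-- The strict truncated multiple harmonic sum
`H_p(k₁,…,k_r) = ∑_{p > m₁ > ⋯ > m_r > 0} ∏ᵢ mᵢ^{-kᵢ}` in `ℤ/pℤ`. -/
def Hp (p : ℕ) (ks : List ℕ) : ZMod p := HAux p p ks

/-- Sum over chains `N > m₁ > ⋯ > m_r > a`, peeling the largest variable first. -/
def Wsum (p : ℕ) : ℕ → ℕ → List ℕ → ZMod p
  | _, _, [] => 1
  | a, N, k :: ks => ∑ m ∈ Finset.Ioo a N, ((m : ZMod p))⁻¹ ^ k * Wsum p a m ks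

/-- Sum over chains `a < m₁ < ⋯ < m_r < p`, peeling the smallest variable first. -/
def Usum (p : ℕ) : ℕ → List ℕ → ZMod p
  | _, [] => 1
  | a, k :: ks => ∑ m ∈ Finset.Ioo a p, ((m : ZMod p))⁻¹ ^ k * Usum p m ks

lemma HAux_eq_Wsum (p : ℕ) (ks : List ℕ) : ∀ N, HAux p N ks = Wsum p 0 N ks := by
  induction ks with
  | nil => intro N; rfl
  | cons k ks ih =>
      intro N
      simp only [HAux, Wsum]
      exact Finset.sum_congr rfl fun m _ => by rw [ih]

lemma Wsum_append (p : ℕ) (k : ℕ) (ks : List ℕ) :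
    ∀ a N, Wsum p a N (ks ++ [k]) =
      ∑ m ∈ Finset.Ioo a N, ((m : ZMod p))⁻¹ ^ k * Wsum p m N ks := by
  induction ks with
  | nil =>
      intro a N
      simp [Wsum]
  | cons k' ks ih =>
      intro a N
      rw [List.cons_append]
      calc Wsum p a N (k' :: (ks ++ [k]))
          = ∑ i ∈ Finset.Ioo a N, ∑ m ∈ Finset.Ioo a i,
              ((m : ZMod p))⁻¹ ^ k * (((i : ZMod p))⁻¹ ^ k' * Wsum p m i ks) := by
            rw [Wsum]
            refine Finset.sum_congr rfl fun i _ => ?_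
            rw [ih, Finset.mul_sum]
            exact Finset.sum_congr rfl fun m _ => by ring
        _ = ∑ m ∈ Finset.Ioo a N, ∑ i ∈ Finset.Ioo m N,
              ((m : ZMod p))⁻¹ ^ k * (((i : ZMod p))⁻¹ ^ k' * Wsum p m i ks) := by
            refine Finset.sum_comm' ?_
            intro i m
            simp only [Finset.mem_Ioo]
            omega
        _ = ∑ m ∈ Finset.Ioo a N, ((m : ZMod p))⁻¹ ^ k * Wsum p m N (k' :: ks) := by
            refine Finset.sum_congr rfl fun m _ => ?_
            rw [Wsum, Finset.mul_sum]

lemma Usum_eq_Wsum_reverse (p : ℕ) (ks : List ℕ) :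
    ∀ a, Usum p a ks = Wsum p a p ks.reverse := by
  induction ks with
  | nil => intro a; rfl
  | cons k ks ih =>
      intro a
      rw [List.reverse_cons, Wsum_append]
      simp only [Usum]
      exact Finset.sum_congr rfl fun m _ => by rw [ih]

lemma Wsum_substitution (p : ℕ) (hp : p.Prime) (ks : List ℕ) :
    ∀ N, N ≤ p → Wsum p 0 N ks = (-1 : ZMod p) ^ ks.sum * Usum p (p - N) ks := by
  haveI : Fact p.Prime := ⟨hp⟩
  induction ks with
  | nil => intro N _; simp [Wsum, Usum]
  | cons k ks ih =>
      intro N hN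
      simp only [Wsum, Usum, List.sum_cons]
      rw [Finset.mul_sum]
      refine Finset.sum_nbij' (fun m => p - m) (fun n => p - n) ?_ ?_ ?_ ?_ ?_
      · intro m hm
        simp only [Finset.mem_Ioo] at *
        omega
      · intro n hn
        simp only [Finset.mem_Ioo] at *
        omega
      · intro m hm
        simp only [Finset.mem_Ioo] at hm
        show p - (p - m) = m
        omega
      · intro n hn
        simp only [Finset.mem_Ioo] at hn
        show p - (p - n) = n
        omega
      · intro m hm
        simp only [Finset.mem_Ioo] at hm
        have hmp : m ≤ p := by omega
        have hcast : ((p - m : ℕ) : ZMod p) = -(m : ZMod p) := by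
          rw [Nat.cast_sub hmp, ZMod.natCast_self, zero_sub]
        have key : ((-1 : ZMod p)) ^ k * ((-1 : ZMod p)) ^ k = 1 := by
          rw [← pow_add, ← two_mul, pow_mul]
          norm_num
        rw [ih m (by omega), hcast, inv_neg, neg_pow, pow_add]
        linear_combination (-(((-1 : ZMod p)) ^ ks.sum *
          ((m : ZMod p))⁻¹ ^ k * Usum p (p - m) ks)) * key
      
/-- Reversal identity: `H_p(k₁,…,k_r) ≡ (-1)^{k₁+⋯+k_r} H_p(k_r,…,k_1) (mod p)`. -/
theorem stmt_3 (p : ℕ) (hp : p.Prime) (ks : List ℕ) (hks : ∀ k ∈ ks, 0 < k) :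
    Hp p ks = (-1 : ZMod p) ^ (ks.sum) * Hp p ks.reverse := by
  have h1 : Hp p ks = Wsum p 0 p ks := HAux_eq_Wsum p ks p
  have h2 : Hp p ks.reverse = Wsum p 0 p ks.reverse := HAux_eq_Wsum p ks.reverse p
  rw [h1, h2, Wsum_substitution p hp ks p le_rfl, Nat.sub_self,
    Usum_eq_Wsum_reverse p ks 0]
end

section
/- For a prime p and positive integers l ≤ p-1, the congruence (l)_{p-l}·(z)_{p-l} / ((2z+1)_{p-l}·(p-l)!) ≡ (-1)^{l-1}·(z(z^{p-1}-1)/((2z)^{p-1}-1))·((2z-l+1)_{l-1}/((z-l)_l)) (mod p) holds as an identity of rational functions in z over ℤ/pℤ, where (a)_n denotes the rising factorial. -/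
open Polynomial Finset

section aux

lemma asc_prod (R : Type*) [CommSemiring R] (n : ℕ) :
    ascPochhammer R n = ∏ i ∈ range n, (X + (i : R[X])) := by
  induction n with
  | zero => simp
  | succ n ih => rw [ascPochhammer_succ_right, ih, prod_range_succ]

variable (p : ℕ) [Fact p.Prime]

lemma prod_zmod {M : Type*} [CommMonoid M] (f : ZMod p → M) :
    ∏ a : ZMod p, f a = ∏ i ∈ range p, f (i : ZMod p) := by
  haveI : NeZero p := ⟨(Fact.out : p.Prime).ne_zero⟩
  refine (Finset.prod_nbij' (fun a => a.val) (fun i => (i : ZMod p))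
    (fun a _ => mem_range.2 (ZMod.val_lt a)) (fun i _ => mem_univ _)
    (fun a _ => ZMod.natCast_rightInverse a)
    (fun i hi => ZMod.val_cast_of_lt (mem_range.1 hi))
    (fun a _ => by rw [ZMod.natCast_rightInverse a]))

lemma key1 : ascPochhammer (ZMod p) p = X ^ p - X := by
  have hp := (Fact.out : p.Prime)
  have hmonic : (X ^ p - X : (ZMod p)[X]).Monic := by
    apply monic_X_pow_sub
    refine degree_X_le.trans_lt ?_
    exact_mod_cast Nat.one_lt_cast.mpr hp.one_lt
  have hroots : (X ^ p - X : (ZMod p)[X]).roots = Finset.univ.val := by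
    have := FiniteField.roots_X_pow_card_sub_X (ZMod p)
    rwa [ZMod.card p] at this
  have hcard : Multiset.card (X ^ p - X : (ZMod p)[X]).roots
      = (X ^ p - X : (ZMod p)[X]).natDegree := by
    rw [hroots, FiniteField.X_pow_card_sub_X_natDegree_eq (ZMod p) hp.one_lt]
    simpa using (ZMod.card p)
  have h := prod_multiset_X_sub_C_of_monic_of_roots_card_eq hmonic hcard
  rw [hroots] at h
  have huniv : (Finset.univ.val.map fun a : ZMod p => X - C a).prod
      = ∏ a : ZMod p, (X - C a) := rfl
  rw [huniv] at h
  have h2 : ∏ a : ZMod p, ((X : (ZMod p)[X]) - C a) = ∏ a : ZMod p, (X + C a) := by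
    rw [← Equiv.prod_comp (Equiv.neg (ZMod p)) (fun a : ZMod p => X - C a)]
    exact Finset.prod_congr rfl fun a _ => by simp [sub_neg_eq_add]
  rw [asc_prod, ← h, h2, prod_zmod p (fun a : ZMod p => X + C a)]
  exact Finset.prod_congr rfl fun i _ => by rw [map_natCast C i]

lemma key2 : (ascPochhammer (ZMod p) (p - 1)).comp (X + 1) = X ^ (p - 1) - 1 := by
  have hp := (Fact.out : p.Prime)
  have hp2 : 2 ≤ p := hp.two_le
  have hm := ascPochhammer_mul (ZMod p) 1 (p - 1)
  rw [show 1 + (p - 1) = p by omega, ascPochhammer_one, Nat.cast_one, key1] at hm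
  apply mul_left_cancel₀ (X_ne_zero (R := ZMod p))
  rw [hm, mul_sub, mul_one, ← pow_succ', show p - 1 + 1 = p by omega]

end aux

/-- For a prime `p` and `1 ≤ l ≤ p-1`, in `𝔽_p(z)`:
`(l)_{p-l}(z)_{p-l}/((2z+1)_{p-l}(p-l)!) =
 (-1)^{l-1} · z(z^{p-1}-1)/((2z)^{p-1}-1) · (2z-l+1)_{l-1}/((z-l)_l)`. -/
theorem stmt_5 (p l : ℕ) [Fact p.Prime] (hl : 1 ≤ l) (hlp : l ≤ p - 1) :
    (ascPochhammer (RatFunc (ZMod p)) (p - l)).eval (l : RatFunc (ZMod p)) *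
        (ascPochhammer (RatFunc (ZMod p)) (p - l)).eval (RatFunc.X) /
        ((ascPochhammer (RatFunc (ZMod p)) (p - l)).eval (2 * RatFunc.X + 1) *
          ((p - l).factorial : RatFunc (ZMod p))) =
      (-1 : RatFunc (ZMod p)) ^ (l - 1) *
        (RatFunc.X * (RatFunc.X ^ (p - 1) - 1) / ((2 * RatFunc.X) ^ (p - 1) - 1)) *
        ((ascPochhammer (RatFunc (ZMod p)) (l - 1)).eval (2 * RatFunc.X - (l : RatFunc (ZMod p)) + 1) /
          (ascPochhammer (RatFunc (ZMod p)) l).eval (RatFunc.X - (l : RatFunc (ZMod p)))) := by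
  have hp := (Fact.out : p.Prime)
  set K := RatFunc (ZMod p)
  set x : K := RatFunc.X with hx
  have hlp2 : l < p := by omega
  have hp2 : 2 ≤ p := hp.two_le
  -- element-level evaluation lemmas
  have hsplit : ∀ (a b : ℕ) (y : K),
      (ascPochhammer K a).eval y * (ascPochhammer K b).eval (y + (a : K)) =
        (ascPochhammer K (a + b)).eval y := by
    intro a b y
    have := congrArg (Polynomial.eval y) (ascPochhammer_mul K a b)
    simpa [eval_comp] using this
  have hE1 : ∀ y : K, (ascPochhammer K p).eval y = y ^ p - y := by
    intro y
    have := congrArg (aeval y) (key1 p)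
    simpa [aeval_def, ← ascPochhammer_eval₂ (algebraMap (ZMod p) K)] using this
  have hE2 : ∀ y : K, (ascPochhammer K (p - 1)).eval (y + 1) = y ^ (p - 1) - 1 := by
    intro y
    have := congrArg (aeval y) (key2 p)
    rw [aeval_comp] at this
    simpa [aeval_def, ← ascPochhammer_eval₂ (algebraMap (ZMod p) K)] using this
  -- cast facts
  have hpK : ((p : ℕ) : K) = 0 := by
    have : ((p : ℕ) : ZMod p) = 0 := ZMod.natCast_self p
    rw [← map_natCast (algebraMap (ZMod p) K) p, this, map_zero]
  have hcast : ((p - l : ℕ) : K) = -(l : K) := by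
    rw [Nat.cast_sub hlp2.le, hpK, zero_sub]
  -- the two main product identities
  have hBG : (ascPochhammer K (p - l)).eval x *
      (ascPochhammer K l).eval (x - (l : K)) = x * (x ^ (p - 1) - 1) := by
    have := hsplit (p - l) l x
    rw [hcast, show p - l + l = p by omega, hE1] at this
    rw [show x + -(l : K) = x - (l : K) by ring] at this
    rw [this, mul_sub, mul_one, ← pow_succ', show p - 1 + 1 = p by omega]
  have hCE : (ascPochhammer K (p - l)).eval (2 * x + 1) *
      (ascPochhammer K (l - 1)).eval (2 * x - (l : K) + 1) = (2 * x) ^ (p - 1) - 1 := by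
    have := hsplit (p - l) (l - 1) (2 * x + 1)
    rw [hcast, show p - l + (l - 1) = p - 1 by omega] at this
    rw [show 2 * x + 1 + -(l : K) = 2 * x - (l : K) + 1 by ring] at this
    rw [this, hE2 (2 * x)]
  -- the scalar identity
  have hA : (ascPochhammer K (p - l)).eval ((l : ℕ) : K) =
      (-1 : K) ^ (l - 1) * ((p - l).factorial : K) := by
    have h1 : (ascPochhammer ℕ (p - l)).eval l = (p - 1).descFactorial (p - l) := by
      rw [ascPochhammer_nat_eq_descFactorial, show l + (p - l) - 1 = p - 1 by omega]
    have h2 : (((p - 1).descFactorial (p - l) : ℕ) : ZMod p) =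
        (-1) ^ (p - l) * ((p - l).factorial : ZMod p) :=
      ZMod.cast_descFactorial (by omega)
    have h3 : (ascPochhammer K (p - l)).eval ((l : ℕ) : K) =
        (((p - 1).descFactorial (p - l) : ℕ) : K) := by
      rw [← ascPochhammer_eval_cast, h1]
    have h4 : (((p - 1).descFactorial (p - l) : ℕ) : K) =
        (-1 : K) ^ (p - l) * ((p - l).factorial : K) := by
      have := congrArg (algebraMap (ZMod p) K) h2
      simpa [map_natCast, map_mul, map_pow] using this
    have hpar : (-1 : K) ^ (p - l) = (-1 : K) ^ (l - 1) := by
      rcases eq_or_ne p 2 with hp2' | hp2'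
      · have hl1 : l = 1 := by omega
        subst hp2' hl1
        simp only [show 2 - 1 = 1 from rfl, show 1 - 1 = 0 from rfl, pow_one, pow_zero]
        have h20 : ((2 : ℕ) : K) = 0 := by
          rw [← map_natCast (algebraMap (ZMod 2) K) 2, ZMod.natCast_self 2, map_zero]
        push_cast at h20
        linear_combination -h20
      · have hodd : Odd p := hp.odd_of_ne_two hp2'
        have heven : Even (p - 1) := by
          rcases hodd with ⟨k, hk⟩; exact ⟨k, by omega⟩
        have : (p - l) + (l - 1) = p - 1 := by omega
        have hiff : Even (p - l) ↔ Even (l - 1) := Nat.even_add.mp (this ▸ heven)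
        rcases Nat.even_or_odd (p - l) with he | ho
        · rw [he.neg_one_pow, (hiff.mp he).neg_one_pow]
        · have ho2 : Odd (l - 1) := by
            rcases Nat.even_or_odd (l - 1) with h | h
            · exact absurd (hiff.mpr h) (Nat.not_even_iff_odd.mpr ho)
            · exact h
          rw [ho.neg_one_pow, ho2.neg_one_pow]
    rw [h3, h4, hpar]
  -- nonvanishing
  have hxne : x ≠ 0 := RatFunc.X_ne_zero
  have hne1 : x ^ (p - 1) - 1 ≠ 0 := by
    have : x ^ (p - 1) - 1 =
        algebraMap (Polynomial (ZMod p)) K (X ^ (p - 1) - 1) := by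
      rw [map_sub, map_pow, map_one, RatFunc.algebraMap_X]
    rw [this]
    apply RatFunc.algebraMap_ne_zero
    intro h
    have := congrArg (Polynomial.eval 0) h
    simp [zero_pow (show p - 1 ≠ 0 by omega)] at this
  have hne2 : (2 * x) ^ (p - 1) - 1 ≠ 0 := by
    have : (2 * x) ^ (p - 1) - 1 =
        algebraMap (Polynomial (ZMod p)) K ((2 * X) ^ (p - 1) - 1) := by
      rw [map_sub, map_pow, map_one, map_mul, RatFunc.algebraMap_X, map_ofNat]
    rw [this]
    apply RatFunc.algebraMap_ne_zero
    intro h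
    have := congrArg (Polynomial.eval 0) h
    simp [zero_pow (show p - 1 ≠ 0 by omega)] at this
  have hBGne := hBG
  have hprod1 : x * (x ^ (p - 1) - 1) ≠ 0 := mul_ne_zero hxne hne1
  have hB : (ascPochhammer K (p - l)).eval x ≠ 0 :=
    fun h => hprod1 (by rw [← hBG, h, zero_mul])
  have hG : (ascPochhammer K l).eval (x - (l : K)) ≠ 0 :=
    fun h => hprod1 (by rw [← hBG, h, mul_zero])
  have hC : (ascPochhammer K (p - l)).eval (2 * x + 1) ≠ 0 :=
    fun h => hne2 (by rw [← hCE, h, zero_mul])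
  have hE : (ascPochhammer K (l - 1)).eval (2 * x - (l : K) + 1) ≠ 0 :=
    fun h => hne2 (by rw [← hCE, h, mul_zero])
  have hF : ((p - l).factorial : K) ≠ 0 := by
    have h1 : (((p - l).factorial : ℕ) : ZMod p) ≠ 0 := by
      rw [Ne, ZMod.natCast_eq_zero_iff]
      intro h
      have := (Nat.Prime.dvd_factorial hp).mp h
      omega
    intro h
    apply h1
    apply (algebraMap (ZMod p) K).injective
    rw [map_natCast, h, map_zero]
  -- finish
  rw [hA, ← hBG, ← hCE]
  field_simp
  rw [mul_div_right_comm, mul_div_cancel_right₀ _ hC, mul_div_right_comm, mul_div_cancel_right₀ _ hG]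
end

section
/- For any prime p and any weight-k, height-s datum, the sum ∑_{k'+k''=k, s'+s''=s, k',k''≥1, s',s''≥0} (∑_{𝐤'∈I_0(k',s')} (-1)^{dep(𝐤')} H_p(reverse(𝐤'))) · (∑_{𝐤''∈I(k'',s'')} H_p^⋆(𝐤'')), where I(k'',s'') is the set of all indices of weight k'' and height s'' (no restriction on the first component), vanishes in 𝒜 (i.e., mod p for all large p), given that ∑_{n=1}^{p-1} n^{-m} ≡ 0 mod p for (p-1) ∤ m. -/
/-- Auxiliary non-strict truncated multiple harmonic sum. -/
def HstarAux (p : ℕ) : ℕ → List ℕ → ZMod p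
  | _, [] => 1
  | N, k :: ks => ∑ m ∈ Finset.Ioo 0 N, ((m : ZMod p))⁻¹ ^ k * HstarAux p (m + 1) ks

/-- `H_p^⋆(k₁,…,k_r) = ∑_{p > m₁ ≥ ⋯ ≥ m_r > 0} ∏ᵢ mᵢ^{-kᵢ}` in `ℤ/pℤ`. -/
def Hps (p : ℕ) (ks : List ℕ) : ZMod p := HstarAux p p ks

/-- `I₀(k,s)`: compositions of `k` with first component `> 1` and height `s`. -/
def Izero (k s : ℕ) : Finset (Composition k) :=
  Finset.univ.filter fun c =>
    2 ≤ c.blocks.headI ∧ (c.blocks.filter fun x => 2 ≤ x).length = s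

/-- `I(k,s)`: all compositions of `k` of height `s` (no condition on the first
component). -/
def Iall (k s : ℕ) : Finset (Composition k) :=
  Finset.univ.filter fun c => (c.blocks.filter fun x => 2 ≤ x).length = s

section helpers

variable {M : Type*} [AddCommMonoid M] {β γ : Type*}

lemma list_sum_swap (s : Finset ℕ) (l : List β) (F : ℕ → β → M) :
    ∑ x ∈ s, (l.map (F x)).sum = (l.map (fun b => ∑ x ∈ s, F x b)).sum := by
  induction l with
  | nil => simp
  | cons b t ih => simp [Finset.sum_add_distrib, ih]

lemma double_split {A : Type*} [AddCommGroup A] (N : ℕ) (f : ℕ → ℕ → A) :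
    ∑ n ∈ Finset.Ioo 0 N, ∑ m ∈ Finset.Ioo 0 N, f n m
      = (∑ n ∈ Finset.Ioo 0 N, ∑ m ∈ Finset.Ioo 0 (n+1), f n m)
        + ((∑ m ∈ Finset.Ioo 0 N, ∑ n ∈ Finset.Ioo 0 (m+1), f n m)
            - ∑ n ∈ Finset.Ioo 0 N, f n n) := by
  have key : ∀ n ∈ Finset.Ioo 0 N, ∑ m ∈ Finset.Ioo 0 N, f n m
      = ∑ m ∈ Finset.Ioo 0 (n+1), f n m + ∑ m ∈ Finset.Ioo n N, f n m := by
    intro n hn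
    simp only [Finset.mem_Ioo] at hn
    rw [← Finset.sum_filter_add_sum_filter_not (Finset.Ioo 0 N) (fun m => m ≤ n)]
    congr 1
    · congr 1; ext m; simp only [Finset.mem_filter, Finset.mem_Ioo]; omega
    · congr 1; ext m; simp only [Finset.mem_filter, Finset.mem_Ioo, not_le]; omega
  rw [Finset.sum_congr rfl key, Finset.sum_add_distrib]
  congr 1
  have swap : ∑ n ∈ Finset.Ioo 0 N, ∑ m ∈ Finset.Ioo n N, f n m
      = ∑ m ∈ Finset.Ioo 0 N, ∑ n ∈ Finset.Ioo 0 m, f n m := by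
    refine Finset.sum_comm' ?_
    intro n m; simp only [Finset.mem_Ioo]; omega
  rw [swap]
  rw [eq_sub_iff_add_eq, ← Finset.sum_add_distrib]
  refine Finset.sum_congr rfl fun m hm => ?_
  simp only [Finset.mem_Ioo] at hm
  have : Finset.Ioo 0 (m+1) = insert m (Finset.Ioo 0 m) := by
    ext x; simp only [Finset.mem_insert, Finset.mem_Ioo]; omega
  rw [this, Finset.sum_insert (by simp)]
  abel

end helpers

/-- All single-entry bumps of a list by `a`. -/
def bumps (a : ℕ) : List ℕ → List (List ℕ)
  | [] => []
  | k :: ks => ((k + a) :: ks) :: (bumps a ks).map (k :: ·)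

/-- The truncated power sum. -/
def Spow (p N m : ℕ) : ZMod p := ∑ n ∈ Finset.Ioo 0 N, ((n : ZMod p))⁻¹ ^ m

lemma stuffle (p a : ℕ) (L : List ℕ) (N : ℕ) :
    Spow p N a * HstarAux p N L
      = ((List.permutations'Aux a L).map (HstarAux p N)).sum
        - ((bumps a L).map (HstarAux p N)).sum := by
  induction L generalizing N with
  | nil => simp [Spow, bumps, List.permutations'Aux, HstarAux, Finset.sum_mul]
  | cons k ks ih =>
    simp only [List.permutations'Aux, bumps, List.map_cons, List.sum_cons, List.map_map]
    have expand : Spow p N a * HstarAux p N (k :: ks)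
        = ∑ n ∈ Finset.Ioo 0 N, ∑ m ∈ Finset.Ioo 0 N,
            ((n : ZMod p))⁻¹ ^ a * (((m : ZMod p))⁻¹ ^ k * HstarAux p (m+1) ks) := by
      simp [Spow, HstarAux, Finset.sum_mul, Finset.mul_sum]
      rw [Finset.sum_comm]
    rw [expand, double_split N (fun n m => ((n : ZMod p))⁻¹ ^ a * (((m : ZMod p))⁻¹ ^ k * HstarAux p (m+1) ks))]
    have part1 : ∑ n ∈ Finset.Ioo 0 N, ∑ m ∈ Finset.Ioo 0 (n+1),
          ((n : ZMod p))⁻¹ ^ a * (((m : ZMod p))⁻¹ ^ k * HstarAux p (m+1) ks)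
        = HstarAux p N (a :: k :: ks) := by
      simp [HstarAux, Finset.mul_sum]
    have part3 : ∑ n ∈ Finset.Ioo 0 N, ((n : ZMod p))⁻¹ ^ a * (((n : ZMod p))⁻¹ ^ k * HstarAux p (n+1) ks)
        = HstarAux p N ((k + a) :: ks) := by
      refine Finset.sum_congr rfl fun n _ => ?_
      show _ = ((n : ZMod p))⁻¹ ^ (k+a) * HstarAux p (n+1) ks
      rw [pow_add]; ring
    have part2 : ∑ m ∈ Finset.Ioo 0 N, ∑ n ∈ Finset.Ioo 0 (m+1),
          ((n : ZMod p))⁻¹ ^ a * (((m : ZMod p))⁻¹ ^ k * HstarAux p (m+1) ks)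
        = ((List.permutations'Aux a ks).map (fun τ => HstarAux p N (k :: τ))).sum
          - ((bumps a ks).map (fun τ => HstarAux p N (k :: τ))).sum := by
      have inner : ∀ m ∈ Finset.Ioo 0 N, ∑ n ∈ Finset.Ioo 0 (m+1),
            ((n : ZMod p))⁻¹ ^ a * (((m : ZMod p))⁻¹ ^ k * HstarAux p (m+1) ks)
          = ((m : ZMod p))⁻¹ ^ k * (Spow p (m+1) a * HstarAux p (m+1) ks) := by
        intro m _
        rw [Spow, Finset.sum_mul, Finset.mul_sum]
        refine Finset.sum_congr rfl fun n _ => by ring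
      rw [Finset.sum_congr rfl inner]
      have : ∀ m ∈ Finset.Ioo 0 N, ((m : ZMod p))⁻¹ ^ k * (Spow p (m+1) a * HstarAux p (m+1) ks)
          = ((List.permutations'Aux a ks).map (fun τ => ((m : ZMod p))⁻¹ ^ k * HstarAux p (m+1) τ)).sum
            - ((bumps a ks).map (fun τ => ((m : ZMod p))⁻¹ ^ k * HstarAux p (m+1) τ)).sum := by
        intro m _
        rw [ih (m+1)]
        rw [mul_sub]
        congr 1
        · induction (List.permutations'Aux a ks) with
          | nil => simp
          | cons x t iht => simp [mul_add, iht]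
        · induction (bumps a ks) with
          | nil => simp
          | cons x t iht => simp [mul_add, iht]
      rw [Finset.sum_congr rfl this, Finset.sum_sub_distrib]
      congr 1
      · rw [list_sum_swap]
        refine congrArg _ (List.map_congr_left fun τ _ => ?_)
        simp [HstarAux]
      · rw [list_sum_swap]
        refine congrArg _ (List.map_congr_left fun τ _ => ?_)
        simp [HstarAux]
    rw [part1, part2, part3]
    simp only [List.map_map, Function.comp_def]
    abel
section cross

variable {M : Type*} [AddCommMonoid M]

lemma sub_cross (a x : ℕ) (ρ : List ℕ) :
    ∀ (f : List ℕ → M),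
    ((List.permutations'Aux x ρ).map (fun τ => ((bumps a τ).map f).sum)).sum
      = ((List.permutations'Aux (x + a) ρ).map f).sum
        + ((bumps a ρ).map (fun c => ((List.permutations'Aux x c).map f).sum)).sum := by
  induction ρ with
  | nil => intro f; simp [List.permutations'Aux, bumps]
  | cons y ys ih =>
    intro f
    simp only [List.permutations'Aux, bumps, List.map_cons, List.sum_cons, List.map_map,
      Function.comp_def]
    rw [List.sum_map_add, ih (fun c => f (y :: c)), List.sum_map_add]
    abel

lemma cross (a : ℕ) (t : List ℕ) :
    ∀ (f : List ℕ → M),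
    ((t.permutations').map (fun τ => ((bumps a τ).map f).sum)).sum
      = ((bumps a t).map (fun u => ((u.permutations').map f).sum)).sum := by
  induction t with
  | nil => intro f; simp [bumps]
  | cons x xs ih =>
    intro f
    have hP : ∀ (z : ℕ) (l : List ℕ), (z :: l).permutations' = (l.permutations').flatMap (List.permutations'Aux z) := by
      intro z l; rfl
    rw [hP]
    have hflat : ∀ (L : List (List ℕ)) (g : List ℕ → List (List ℕ)) (h : List ℕ → M),
        ((L.flatMap g).map h).sum = (L.map (fun ρ => ((g ρ).map h).sum)).sum := by
      intro L g h
      induction L with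
      | nil => simp
      | cons b bs ihb => simp [List.flatMap_cons, ihb]
    rw [hflat]
    have step : ∀ ρ ∈ xs.permutations',
        ((List.permutations'Aux x ρ).map (fun τ => ((bumps a τ).map f).sum)).sum
          = ((List.permutations'Aux (x + a) ρ).map f).sum
            + ((bumps a ρ).map (fun c => ((List.permutations'Aux x c).map f).sum)).sum :=
      fun ρ _ => sub_cross a x ρ f
    rw [List.map_congr_left step, List.sum_map_add]
    rw [ih (fun c => ((List.permutations'Aux x c).map f).sum)]
    show _ = ((bumps a (x :: xs)).map (fun u => ((u.permutations').map f).sum)).sum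
    simp only [bumps, List.map_cons, List.sum_cons, List.map_map, Function.comp_def]
    congr 1
    · rw [hP, hflat]
    · refine congrArg _ (List.map_congr_left fun u _ => ?_)
      rw [hP, hflat]

end cross

lemma flat_sum {M : Type*} [AddCommMonoid M] (L : List (List ℕ)) (g : List ℕ → List (List ℕ))
    (h : List ℕ → M) : ((L.flatMap g).map h).sum = (L.map (fun ρ => ((g ρ).map h).sum)).sum := by
  induction L with
  | nil => simp
  | cons b bs ihb => simp [List.flatMap_cons, ihb]

lemma bumps_sum_eq (a : ℕ) : ∀ (t u : List ℕ), u ∈ bumps a t → u.sum = a + t.sum := by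
  intro t
  induction t with
  | nil => intro u hu; simp [bumps] at hu
  | cons k ks ih =>
    intro u hu
    simp only [bumps, List.mem_cons, List.mem_map] at hu
    rcases hu with rfl | ⟨v, hv, rfl⟩
    · simp [List.sum_cons]; ring
    · simp only [List.sum_cons, ih v hv]; ring

lemma bumps_length_eq (a : ℕ) : ∀ (t u : List ℕ), u ∈ bumps a t → u.length = t.length := by
  intro t
  induction t with
  | nil => intro u hu; simp [bumps] at hu
  | cons k ks ih =>
    intro u hu
    simp only [bumps, List.mem_cons, List.mem_map] at hu
    rcases hu with rfl | ⟨v, hv, rfl⟩ <;> simp [ih]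
    exact ih _ ‹_›

lemma bumps_pos (a : ℕ) : ∀ (t u : List ℕ), u ∈ bumps a t → (∀ x ∈ t, 1 ≤ x) → ∀ x ∈ u, 1 ≤ x := by
  intro t
  induction t with
  | nil => intro u hu; simp [bumps] at hu
  | cons k ks ih =>
    intro u hu hpos x hx
    simp only [bumps, List.mem_cons, List.mem_map] at hu
    rcases hu with rfl | ⟨v, hv, rfl⟩
    · rcases List.mem_cons.1 hx with rfl | hx'
      · have := hpos k (by simp); omega
      · exact hpos x (by simp [hx'])
    · rcases List.mem_cons.1 hx with rfl | hx'
      · exact hpos x (by simp)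
      · exact ih v hv (fun y hy => hpos y (by simp [hy])) x hx'

lemma Tzero (p B : ℕ) (hz : ∀ m, 1 ≤ m → m ≤ B → Spow p p m = 0) :
    ∀ (n : ℕ) (l : List ℕ), l.length ≤ n → l ≠ [] → (∀ x ∈ l, 1 ≤ x) → l.sum ≤ B →
      ((l.permutations').map (Hps p)).sum = 0 := by
  intro n
  induction n with
  | zero => intro l hlen hne; interval_cases h : l.length <;> simp_all
  | succ n ih =>
    intro l hlen hne hpos hsum
    match l with
    | a :: t =>
      have hP : (a :: t).permutations' = (t.permutations').flatMap (List.permutations'Aux a) := rfl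
      rw [hP, flat_sum]
      have step : ∀ ρ ∈ t.permutations',
          ((List.permutations'Aux a ρ).map (Hps p)).sum
            = Spow p p a * HstarAux p p ρ + ((bumps a ρ).map (Hps p)).sum := by
        intro ρ _
        have := stuffle p a ρ p
        show ((List.permutations'Aux a ρ).map (HstarAux p p)).sum = _
        have h2 : ((bumps a ρ).map (Hps p)).sum = ((bumps a ρ).map (HstarAux p p)).sum := rfl
        rw [h2]
        linear_combination -this
      rw [List.map_congr_left step]
      have ha0 : Spow p p a = 0 := by
        refine hz a (hpos a (by simp)) ?_
        have : a ≤ (a :: t).sum := by simp [List.sum_cons]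
        omega
      simp only [ha0, zero_mul, zero_add]
      rw [cross a t (Hps p)]
      refine List.sum_eq_zero ?_
      intro x hx
      simp only [List.mem_map] at hx
      obtain ⟨u, hu, rfl⟩ := hx
      rcases List.eq_nil_or_concat t with rfl | _
      · simp [bumps] at hu
      · have htne : t ≠ [] := by rintro rfl; simp_all
        have hulen : u.length = t.length := bumps_length_eq a t u hu
        have hune : u ≠ [] := by
          intro h; rw [h] at hulen; exact htne (List.length_eq_zero_iff.1 hulen.symm)
        refine ih u ?_ hune (bumps_pos a t u hu (fun y hy => hpos y (by simp [hy]))) ?_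
        · rw [hulen]; simpa using Nat.le_of_succ_le_succ hlen
        · rw [bumps_sum_eq a t u hu]; simpa [List.sum_cons] using hsum

section counting

variable {α : Type*} [DecidableEq α]

lemma list_fubini {M : Type*} [AddCommMonoid M] {β γ : Type*} (L : List β) (K : List γ)
    (F : β → γ → M) :
    (L.map (fun b => (K.map (F b)).sum)).sum = (K.map (fun c => (L.map (fun b => F b c)).sum)).sum := by
  induction L with
  | nil => simp
  | cons b bs ih => simp [List.sum_map_add, ih]

/-- Multiplicity counted via indicator sums, to avoid `BEq` instance issues. -/
def cnt {β : Type*} [DecidableEq β] (τ : β) (L : List β) : ℕ :=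
  (L.map (fun a => if a = τ then 1 else 0)).sum

lemma cnt_eq_multiset_count (τ : α) (L : List α) : Multiset.count τ (L : Multiset α) = cnt τ L := by
  induction L with
  | nil => simp [cnt]
  | cons b bs ih =>
    have : ((b :: bs : List α) : Multiset α) = b ::ₘ (bs : Multiset α) := rfl
    rw [this, Multiset.count_cons, ih]
    by_cases h : b = τ <;> simp [cnt, h, eq_comm, Nat.add_comm]

lemma cnt_pos_of_mem {τ : α} {L : List α} (h : τ ∈ L) : 0 < cnt τ L := by
  induction L with
  | nil => simp at h
  | cons b bs ih =>
    rcases List.mem_cons.1 h with rfl | h'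
    · simp [cnt]
    · have := ih h'
      by_cases hb : b = τ <;> simp [cnt] at this ⊢ <;> [left; skip] <;> simp [hb, this]

lemma cnt_le_length (τ : α) (L : List α) : cnt τ L ≤ L.length := by
  induction L with
  | nil => simp [cnt]
  | cons b bs ih =>
    by_cases hb : b = τ <;> simp [cnt, hb] at ih ⊢ <;> omega

lemma cnt_eq_count (τ : α) (L : List α) : cnt τ L = L.count τ := by
  induction L with
  | nil => simp [cnt]
  | cons b bs ih =>
    by_cases h : b = τ <;> simp [cnt, List.count_cons, ← ih, h, Nat.add_comm] <;> rfl

lemma flat_sum' {M : Type*} [AddCommMonoid M] {β : Type*} (L : List (List β)) (g : List β → List (List β))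
    (h : List β → M) : ((L.flatMap g).map h).sum = (L.map (fun ρ => ((g ρ).map h).sum)).sum := by
  induction L with
  | nil => simp
  | cons b bs ihb => simp [List.flatMap_cons, ihb]

lemma A_eq_map (x : α) (s : List α) :
    List.permutations'Aux x s = (List.range (s.length + 1)).map (fun j => s.insertIdx j x) := by
  induction s with
  | nil => simp [List.permutations'Aux, List.range_succ]
  | cons y ys ih =>
    simp [List.permutations'Aux, ih, List.range_succ_eq_map, List.map_map, Function.comp_def,
      List.insertIdx_succ_cons]

omit [DecidableEq α] in
lemma ins_erase (x : α) : ∀ (τ : List α) (j : ℕ), τ[j]? = some x →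
    (τ.eraseIdx j).insertIdx j x = τ := by
  intro τ
  induction τ with
  | nil => intro j h; simp at h
  | cons y t ih =>
    intro j h
    match j with
    | 0 => simp at h; simp [h]
    | j + 1 =>
      simp only [List.getElem?_cons_succ] at h
      simp [List.eraseIdx_cons_succ, List.insertIdx_succ_cons, ih j h]

omit [DecidableEq α] in
lemma erase_perm (x : α) : ∀ (τ : List α) (j : ℕ), τ[j]? = some x →
    τ.Perm (x :: τ.eraseIdx j) := by
  intro τ
  induction τ with
  | nil => intro j h; simp at h
  | cons y t ih =>
    intro j h
    match j with
    | 0 => simp at h; simp [h]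
    | j + 1 =>
      simp only [List.getElem?_cons_succ] at h
      refine ((ih j h).cons y).trans ?_
      simp only [List.eraseIdx_cons_succ]
      exact List.Perm.swap x y _

lemma ind_sum_count (x : α) (K : ℕ) : ∀ (τ : List α),
    ((List.range τ.length).map (fun j => if τ[j]? = some x then K else 0)).sum
      = cnt x τ * K := by
  intro τ
  induction τ with
  | nil => simp [cnt]
  | cons y t ih =>
    rw [List.length_cons, List.range_succ_eq_map]
    simp only [List.map_cons, List.map_map, Function.comp_def, List.getElem?_cons_succ,
      List.sum_cons, ih, List.getElem?_cons_zero, cnt, List.map_cons, List.sum_cons]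
    by_cases h : y = x <;> simp [h] <;> ring

lemma count_P'_const : ∀ (n : ℕ) (l τ₁ τ₂ : List α), l.length ≤ n → τ₁.Perm l → τ₂.Perm l →
    cnt τ₁ (l.permutations') = cnt τ₂ (l.permutations') := by
  intro n
  induction n with
  | zero =>
    intro l τ₁ τ₂ hl h1 h2
    have : l = [] := List.length_eq_zero_iff.1 (Nat.le_zero.1 hl)
    subst this
    rw [List.perm_nil.1 h1, List.perm_nil.1 h2]
  | succ n ih =>
    intro l τ₁ τ₂ hl h1 h2
    match l with
    | [] => rw [List.perm_nil.1 h1, List.perm_nil.1 h2]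
    | x :: xs =>
      have key : ∀ τ : List α, τ.Perm (x :: xs) → cnt τ ((x :: xs).permutations')
          = cnt x τ * cnt xs (xs.permutations') := by
        intro τ hτ
        have hP : (x :: xs).permutations' = (xs.permutations').flatMap (List.permutations'Aux x) := rfl
        rw [cnt, hP, flat_sum']
        have step1 : ∀ ρ ∈ xs.permutations',
            ((List.permutations'Aux x ρ).map (fun a => if a = τ then 1 else 0)).sum
              = ((List.range (xs.length + 1)).map
                  (fun j => if ρ.insertIdx j x = τ then (1:ℕ) else 0)).sum := by
          intro ρ hρ
          have hρp : ρ.Perm xs := List.mem_permutations'.1 hρ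
          rw [A_eq_map, List.map_map, hρp.length_eq]
          rfl
        rw [List.map_congr_left step1, list_fubini]
        have hτlen : τ.length = xs.length + 1 := hτ.length_eq
        have step2 : ∀ j ∈ List.range (xs.length + 1),
            ((xs.permutations').map (fun ρ => if ρ.insertIdx j x = τ then (1:ℕ) else 0)).sum
              = if τ[j]? = some x then cnt xs (xs.permutations') else 0 := by
          intro j hj
          have hjle : j ≤ xs.length := by
            simp only [List.mem_range] at hj; omega
          by_cases h : τ[j]? = some x
          · rw [if_pos h]
            have equiv : ∀ ρ ∈ xs.permutations', (ρ.insertIdx j x = τ) ↔ (ρ = τ.eraseIdx j) := by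
              intro ρ hρ
              constructor
              · intro he; rw [← he, List.eraseIdx_insertIdx_self]
              · intro he; rw [he]; exact ins_erase x τ j h
            have hrw : ((xs.permutations').map (fun ρ => if ρ.insertIdx j x = τ then (1:ℕ) else 0)).sum
                = ((xs.permutations').map (fun ρ => if ρ = τ.eraseIdx j then (1:ℕ) else 0)).sum := by
              refine congrArg _ (List.map_congr_left fun ρ hρ => ?_)
              by_cases hc : ρ.insertIdx j x = τ
              · rw [if_pos hc, if_pos ((equiv ρ hρ).1 hc)]
              · rw [if_neg hc, if_neg (fun hc2 => hc (((equiv ρ hρ).2 hc2)))]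
            rw [hrw]
            refine ih xs (τ.eraseIdx j) xs (by simpa using Nat.le_of_succ_le_succ hl) ?_ (List.Perm.refl xs)
            have hp1 : τ.Perm (x :: τ.eraseIdx j) := erase_perm x τ j h
            have hp2 : (x :: τ.eraseIdx j).Perm (x :: xs) := hp1.symm.trans hτ
            exact hp2.cons_inv
          · rw [if_neg h]
            refine List.sum_eq_zero fun y hy => ?_
            simp only [List.mem_map] at hy
            obtain ⟨ρ, hρ, rfl⟩ := hy
            have hρp : ρ.Perm xs := List.mem_permutations'.1 hρ
            rw [if_neg]
            intro he
            apply h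
            have hjρ : j ≤ ρ.length := by rw [hρp.length_eq]; exact hjle
            have hlt : j < (ρ.insertIdx j x).length := by rw [he, hτlen]; omega
            rw [← he, List.getElem?_eq_getElem hlt, List.getElem_insertIdx_self hlt]
        rw [List.map_congr_left step2]
        have := ind_sum_count x (cnt xs (xs.permutations')) τ
        rw [hτlen] at this
        exact this
      rw [key τ₁ h1, key τ₂ h2]
      have : cnt x τ₁ = cnt x τ₂ := by
        rw [cnt_eq_count, cnt_eq_count, (h1.trans h2.symm).count_eq]
      rw [this]
end counting


lemma Iall_sum_eq_zero (p k₀ s₀ : ℕ) (hp : p.Prime) (hk0 : 1 ≤ k₀)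
    (hfac : Nat.factorial k₀ < p)
    (hz : ∀ m, 1 ≤ m → m ≤ k₀ → Spow p p m = 0) :
    ∑ c ∈ Iall k₀ s₀, Hps p c.blocks = 0 := by
  haveI : Fact p.Prime := ⟨hp⟩
  rw [← Finset.sum_fiberwise_of_maps_to
    (g := fun c : Composition k₀ => (c.blocks : Multiset ℕ)) (t := (Iall k₀ s₀).image _)
    (fun c hc => Finset.mem_image_of_mem _ hc) (fun c => Hps p c.blocks)]
  refine Finset.sum_eq_zero fun m hm => ?_
  obtain ⟨c₀, hc₀, hgc₀⟩ := Finset.mem_image.1 hm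
  set l := c₀.blocks with hl
  -- basic facts about l
  have hlne : l ≠ [] := by
    intro h
    have := c₀.blocks_sum
    rw [← hl] at this; rw [h] at this; simp at this; omega
  have hlpos : ∀ x ∈ l, 1 ≤ x := fun x hx => c₀.one_le_blocks hx
  have hlsum : l.sum = k₀ := c₀.blocks_sum
  have hllen : l.length ≤ k₀ := c₀.length_le
  -- the labelled permutation sum vanishes
  have hT : ((l.permutations').map (Hps p)).sum = 0 :=
    Tzero p k₀ hz l.length l le_rfl hlne hlpos (le_of_eq hlsum)
  -- rewrite it as a weighted sum over distinct permutations
  have hmult : ((l.permutations' : Multiset (List ℕ)).map (Hps p)).sum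
      = ∑ τ ∈ (l.permutations' : Multiset (List ℕ)).toFinset,
          Multiset.count τ (l.permutations' : Multiset (List ℕ)) • Hps p τ :=
    Finset.sum_multiset_map_count _ _
  have hcoe : ((l.permutations' : Multiset (List ℕ)).map (Hps p)).sum
      = ((l.permutations').map (Hps p)).sum := by
    simp
  set C : ℕ := cnt l (l.permutations') with hC
  have hcount : ∀ τ ∈ (l.permutations' : Multiset (List ℕ)).toFinset,
      Multiset.count τ (l.permutations' : Multiset (List ℕ)) = C := by
    intro τ hτ
    have hτmem : τ ∈ l.permutations' := by simpa using hτ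
    have hτperm : τ.Perm l := List.mem_permutations'.1 hτmem
    rw [cnt_eq_multiset_count]
    exact count_P'_const l.length l τ l le_rfl hτperm (List.Perm.refl l)
  have hzero : (C : ZMod p) * ∑ τ ∈ (l.permutations' : Multiset (List ℕ)).toFinset, Hps p τ = 0 := by
    rw [Finset.mul_sum]
    rw [← hT, ← hcoe, hmult]
    refine Finset.sum_congr rfl fun τ hτ => ?_
    rw [hcount τ hτ, nsmul_eq_mul]
  -- C is nonzero mod p
  have hCpos : 0 < C :=
    cnt_pos_of_mem (List.mem_permutations'.2 (List.Perm.refl l))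
  have hClt : C < p := by
    have h1 : C ≤ (l.permutations').length := cnt_le_length _ _
    have h2 : (l.permutations').length = Nat.factorial l.length := by
      rw [← (List.permutations_perm_permutations' l).length_eq, List.length_permutations]
    have h3 : Nat.factorial l.length ≤ Nat.factorial k₀ := Nat.factorial_le hllen
    omega
  have hCne : (C : ZMod p) ≠ 0 := by
    intro h
    have hdvd : p ∣ C := (ZMod.natCast_eq_zero_iff C p).1 h
    have := Nat.le_of_dvd hCpos hdvd
    omega
  have hF : ∑ τ ∈ (l.permutations' : Multiset (List ℕ)).toFinset, Hps p τ = 0 := by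
    rcases mul_eq_zero.1 hzero with h | h
    · exact absurd h hCne
    · exact h
  -- identify the fiber sum with the sum over distinct permutations
  rw [← hF]
  refine Finset.sum_bij (fun c _ => c.blocks) ?_ ?_ ?_ ?_
  · intro c hc
    simp only [Finset.mem_filter] at hc
    have : (c.blocks : Multiset ℕ) = (l : Multiset ℕ) := by
      rw [hc.2, ← hgc₀]
    have hperm : c.blocks.Perm l := Multiset.coe_eq_coe.1 this
    simp only [Multiset.mem_toFinset, Multiset.mem_coe]
    exact List.mem_permutations'.2 hperm
  · intro c1 h1 c2 h2 he
    exact Composition.ext he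
  · intro τ hτ
    have hτmem : τ ∈ l.permutations' := by simpa using hτ
    have hτperm : τ.Perm l := List.mem_permutations'.1 hτmem
    refine ⟨⟨τ, ?_, ?_⟩, ?_, rfl⟩
    · intro i hi
      exact hlpos i (hτperm.mem_iff.1 hi)
    · rw [hτperm.sum_eq, hlsum]
    · simp only [Finset.mem_filter, Finset.mem_univ, true_and, Iall]
      constructor
      · simp only [Iall, Finset.mem_filter, Finset.mem_univ, true_and] at hc₀
        rw [← hc₀]
        exact (hτperm.filter _).length_eq
      · rw [← hgc₀]
        exact Multiset.coe_eq_coe.2 hτperm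
  · intro c hc; rfl


/-- The middle terms in the proof of the star/non-star lemma vanish: given the
vanishing of the power sums `∑_{n=1}^{p-1} n^{-m}` for `(p-1) ∤ m`, the sum
`∑_{k'+k''=k, s'+s''=s} (∑_{𝐤'∈I₀(k',s')} (-1)^{dep 𝐤'} H_p(reverse 𝐤')) ·
(∑_{𝐤''∈I(k'',s'')} H_p^⋆(𝐤''))` vanishes mod `p` for all large primes `p`. -/
theorem stmt_15 (k s : ℕ) (hk : 2 ≤ k) (hs : 1 ≤ s) (hks : 2 * s ≤ k)
    (hpow : ∀ p : ℕ, p.Prime → ∀ m : ℕ, 0 < m → ¬ (p - 1) ∣ m →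
      ∑ n ∈ Finset.Icc 1 (p - 1), ((n : ZMod p))⁻¹ ^ m = 0) :
    ∃ N : ℕ, ∀ p : ℕ, N ≤ p → p.Prime →
      ∑ k' ∈ Finset.Icc 1 (k - 1), ∑ s' ∈ Finset.range (s + 1),
        (∑ c ∈ Izero k' s', (-1 : ZMod p) ^ c.length * Hp p c.blocks.reverse) *
          (∑ c ∈ Iall (k - k') (s - s'), Hps p c.blocks) = 0 := by
  refine ⟨k.factorial + k + 2, fun p hNp hp => ?_⟩
  refine Finset.sum_eq_zero fun k' hk' => ?_
  refine Finset.sum_eq_zero fun s' _ => ?_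
  haveI : Fact p.Prime := ⟨hp⟩
  rw [mul_eq_zero]
  right
  simp only [Finset.mem_Icc] at hk'
  have hfacpos : 1 ≤ k.factorial := Nat.one_le_iff_ne_zero.2 (Nat.factorial_ne_zero k)
  have hk1 : 1 ≤ k - k' := by omega
  have hfac : Nat.factorial (k - k') < p := by
    have := Nat.factorial_le (show k - k' ≤ k by omega)
    omega
  refine Iall_sum_eq_zero p (k - k') (s - s') hp hk1 hfac ?_
  intro m hm1 hm2
  rw [Spow]
  have hIcc : Finset.Ioo 0 p = Finset.Icc 1 (p - 1) := by
    ext n; simp only [Finset.mem_Ioo, Finset.mem_Icc]; omega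
  rw [hIcc]
  refine hpow p hp m (by omega) ?_
  intro hdvd
  have hmk : m ≤ k := by omega
  have := Nat.le_of_dvd (by omega) hdvd
  omega
end
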